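/- Fix k ∈ ℕ. With N_k(m,n) as above, for all integers m with n/2 < m < n - k, one has N_k(m,n) - N_k(m+1,n) = p(ℓ+1) - 2 p(ℓ) + p(ℓ-1) ≥ 0, where ℓ = n - k - m and p is the partition function. In particular N_k(m,n) ≥ N_k(m+1,n) in this range. -/

import Mathlib

open scoped BigOperators

/-- Partition function `p`, extended by `0` to negative integers. -/
noncomputable def partFun (n : ℤ) : ℤ :=
  if 0 ≤ n then (Fintype.card (Nat.Partition n.toNat) : ℤ) else 0

/-- `I_k(m,n)`: the coefficient of `qⁿ` in
`(∏_{j≥1}(1-q^j))^{-1} ∑_{ℓ≥1}(-1)^{ℓ-1} q^{ℓ((2k-1)ℓ-1)/2+mℓ}`,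
written out via `∑ p(n)qⁿ = ∏(1-q^j)^{-1}`. -/
noncomputable def Ik (k m n : ℕ) : ℤ :=
  ∑ ℓ ∈ Finset.Icc 1 (n + 1), (-1 : ℤ) ^ (ℓ - 1) *
    partFun ((n : ℤ) - ((2 * (k : ℤ) - 1) * (ℓ : ℤ) ^ 2 - (ℓ : ℤ)) / 2 - (m : ℤ) * (ℓ : ℤ))

/-- `N_k(m,n) = I_k(|m|,n) - I_k(|m|+1,n)`. -/
noncomputable def Nk (k : ℕ) (m : ℤ) (n : ℕ) : ℤ :=
  Ik k m.natAbs n - Ik k (m.natAbs + 1) n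

/- ### Auxiliary lemmas -/

lemma multiset_sup_mem (s : Multiset ℕ) (hs : s ≠ 0) : s.sup ∈ s := by
  induction s using Multiset.induction with
  | empty => simp at hs
  | cons a s ih =>
    rw [Multiset.sup_cons]
    rcases eq_or_ne s 0 with rfl | h
    · simp
    · rcases le_total a s.sup with h' | h'
      · rw [sup_eq_right.2 h']; exact Multiset.mem_cons_of_mem (ih h)
      · rw [sup_eq_left.2 h']; exact Multiset.mem_cons_self _ _

/-- partitions with all parts ≥ 2 -/
def QP (n : ℕ) : Type := {π : n.Partition // ∀ i ∈ π.parts, 2 ≤ i}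

noncomputable instance (n : ℕ) : Fintype (QP n) := by
  unfold QP; classical infer_instance

/-- `p(m+1) = p(m) + q(m+1)` -/
lemma card_step (m : ℕ) :
    Fintype.card ((m+1).Partition) = Fintype.card (m.Partition) + Fintype.card (QP (m+1)) := by
  classical
  have e1 : {π : (m+1).Partition // 1 ∈ π.parts} ≃ m.Partition := by
    refine
      { toFun := fun π => ⟨π.1.parts.erase 1, ?_, ?_⟩
        invFun := fun π => ⟨⟨1 ::ₘ π.parts, ?_, ?_⟩, Multiset.mem_cons_self _ _⟩
        left_inv := ?_
        right_inv := ?_ }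
    · intro i hi; exact π.1.parts_pos (Multiset.mem_of_mem_erase hi)
    · have := π.1.parts_sum
      have h2 : (1 ::ₘ π.1.parts.erase 1).sum = m + 1 := by
        rw [Multiset.cons_erase π.2, this]
      rw [Multiset.sum_cons] at h2
      omega
    · intro i hi
      rcases Multiset.mem_cons.1 hi with rfl | hi
      · norm_num
      · exact π.parts_pos hi
    · rw [Multiset.sum_cons, π.parts_sum]; ring
    · rintro ⟨π, hπ⟩
      apply Subtype.ext
      apply Nat.Partition.ext
      simp [Multiset.cons_erase hπ]
    · rintro π
      apply Nat.Partition.ext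
      simp [Multiset.erase_cons_head]
  have e2 : {π : (m+1).Partition // ¬ 1 ∈ π.parts} ≃ QP (m+1) := by
    refine Equiv.subtypeEquiv (Equiv.refl _) fun π => ?_
    simp only [Equiv.refl_apply]
    constructor
    · intro h i hi
      have := π.parts_pos hi
      rcases Nat.lt_or_ge i 2 with h2 | h2
      · have h1 : i = 1 := by omega
        exact absurd (h1 ▸ hi) h
      · exact h2
    · intro h h1
      exact absurd (h 1 h1) (by norm_num)
  rw [← Fintype.card_congr e1, ← Fintype.card_congr e2]
  have := Fintype.card_congr (Equiv.sumCompl (fun π : (m+1).Partition => 1 ∈ π.parts))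
  rw [Fintype.card_sum] at this
  omega

/-- `q(l) ≤ q(l+1)` for `l ≥ 1`. -/
lemma QP_mono (l : ℕ) (hl : 1 ≤ l) : Fintype.card (QP l) ≤ Fintype.card (QP (l+1)) := by
  classical
  have key : ∀ π : QP l, π.1.parts ≠ 0 := by
    rintro ⟨π, hπ⟩ h0
    have := π.parts_sum
    rw [h0] at this
    simp at this
    omega
  have supmem : ∀ π : QP l, π.1.parts.sup ∈ π.1.parts :=
    fun π => multiset_sup_mem _ (key π)
  set F : QP l → QP (l+1) := fun π =>
    ⟨⟨(π.1.parts.sup + 1) ::ₘ π.1.parts.erase π.1.parts.sup, by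
        intro i hi
        rcases Multiset.mem_cons.1 hi with rfl | hi
        · omega
        · exact π.1.parts_pos (Multiset.mem_of_mem_erase hi), by
        have h1 : (π.1.parts.sup ::ₘ π.1.parts.erase π.1.parts.sup).sum = l := by
          rw [Multiset.cons_erase (supmem π), π.1.parts_sum]
        rw [Multiset.sum_cons] at h1 ⊢
        omega⟩, by
      intro i hi
      rcases Multiset.mem_cons.1 hi with rfl | hi
      · have := π.2 _ (supmem π); omega
      · exact π.2 _ (Multiset.mem_of_mem_erase hi)⟩ with hF
  apply Fintype.card_le_of_injective F
  intro π₁ π₂ h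
  have hparts : (π₁.1.parts.sup + 1) ::ₘ π₁.1.parts.erase π₁.1.parts.sup
      = (π₂.1.parts.sup + 1) ::ₘ π₂.1.parts.erase π₂.1.parts.sup := by
    have := congrArg (fun x : QP (l+1) => x.1.parts) h
    simpa [hF] using this
  have hsup : ∀ π : QP l, ((π.1.parts.sup + 1) ::ₘ π.1.parts.erase π.1.parts.sup).sup
      = π.1.parts.sup + 1 := by
    intro π
    rw [Multiset.sup_cons]
    have : (π.1.parts.erase π.1.parts.sup).sup ≤ π.1.parts.sup :=
      Multiset.sup_le.2 fun b hb => Multiset.le_sup (Multiset.mem_of_mem_erase hb)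
    exact sup_eq_left.2 (le_trans this (Nat.le_succ _))
  have hM : π₁.1.parts.sup = π₂.1.parts.sup := by
    have := (hsup π₁).symm.trans ((congrArg Multiset.sup hparts).trans (hsup π₂))
    omega
  have herase : π₁.1.parts.erase π₁.1.parts.sup = π₂.1.parts.erase π₂.1.parts.sup := by
    have := congrArg (fun s => s.erase (π₁.1.parts.sup + 1)) hparts
    simpa [hM, Multiset.erase_cons_head] using this
  rw [hM] at herase
  apply Subtype.ext; apply Nat.Partition.ext
  rw [← Multiset.cons_erase (supmem π₁), ← Multiset.cons_erase (supmem π₂), hM, herase]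

lemma partFun_of_neg {x : ℤ} (h : x < 0) : partFun x = 0 := by
  rw [partFun, if_neg (by omega)]

lemma partFun_of_nonneg {x : ℤ} (h : 0 ≤ x) :
    partFun x = (Fintype.card (Nat.Partition x.toNat) : ℤ) := by
  rw [partFun, if_pos h]

/-- Convexity of the partition function for arguments `≥ 1`. -/
lemma partFun_convex (x : ℤ) (hx : 1 ≤ x) :
    2 * partFun x ≤ partFun (x + 1) + partFun (x - 1) := by
  obtain ⟨i, hi⟩ : ∃ i : ℕ, x = (i : ℤ) + 1 := ⟨(x - 1).toNat, by omega⟩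
  subst hi
  rw [partFun_of_nonneg (by omega), partFun_of_nonneg (by omega),
    partFun_of_nonneg (by omega)]
  have h1 : ((i : ℤ) + 1).toNat = i + 1 := by omega
  have h2 : ((i : ℤ) + 1 + 1).toNat = i + 2 := by omega
  have h3 : ((i : ℤ) + 1 - 1).toNat = i := by omega
  rw [h1, h2, h3]
  have e1 := card_step (i + 1)
  have e2 := card_step i
  have e3 := QP_mono (i + 1) (by omega)
  have : 2 * Fintype.card ((i+1).Partition) ≤
      Fintype.card ((i+1+1).Partition) + Fintype.card (i.Partition) := by omega
  exact_mod_cast this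

/-- For `2m > n` (and `k ≥ 1`), only the `ℓ = 1` term survives in `Ik`. -/
lemma Ik_big (k m n : ℕ) (hk : 1 ≤ k) (h : (n : ℤ) < 2 * m) :
    Ik k m n = partFun ((n : ℤ) - (k - 1) - m) := by
  rw [Ik, Finset.sum_eq_single_of_mem 1 (Finset.mem_Icc.2 ⟨le_refl _, by omega⟩)]
  · norm_num
    congr 1
    have h2 : 2 * (k : ℤ) - 1 - 1 = ((k : ℤ) - 1) * 2 := by ring
    rw [h2, Int.mul_ediv_cancel _ (by norm_num)]
  · intro ℓ hℓ hne
    have hℓ2 : 2 ≤ ℓ := by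
      rcases Finset.mem_Icc.1 hℓ with ⟨h1, _⟩; omega
    have hL : (2 : ℤ) ≤ (ℓ : ℤ) := by exact_mod_cast hℓ2
    have hnum : 0 ≤ (2 * (k : ℤ) - 1) * (ℓ : ℤ) ^ 2 - (ℓ : ℤ) := by
      have h1 : (1 : ℤ) ≤ 2 * (k : ℤ) - 1 := by
        have : (1 : ℤ) ≤ (k : ℤ) := by exact_mod_cast hk
        omega
      nlinarith
    have hdiv : 0 ≤ ((2 * (k : ℤ) - 1) * (ℓ : ℤ) ^ 2 - (ℓ : ℤ)) / 2 :=
      Int.ediv_nonneg hnum (by norm_num)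
    have hml : 2 * (m : ℤ) ≤ (m : ℤ) * (ℓ : ℤ) := by
      have hm0 : (0 : ℤ) ≤ (m : ℤ) := Int.natCast_nonneg m
      nlinarith
    have : (n : ℤ) - ((2 * (k : ℤ) - 1) * (ℓ : ℤ) ^ 2 - (ℓ : ℤ)) / 2 - (m : ℤ) * (ℓ : ℤ) < 0 := by
      omega
    rw [partFun_of_neg this, mul_zero]

/-- For `n/2 < m < n - k`, with `ℓ = n - k - m`:
`N_k(m,n) - N_k(m+1,n) = p(ℓ+1) - 2p(ℓ) + p(ℓ-1) ≥ 0`;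
in particular `N_k(m,n) ≥ N_k(m+1,n)`. -/
theorem Nk_diff_convex (k : ℕ) (hk : 1 ≤ k) (n : ℕ) (m : ℤ)
    (hm₁ : (n : ℤ) < 2 * m) (hm₂ : m < (n : ℤ) - k) :
    Nk k m n - Nk k (m + 1) n =
        partFun (((n : ℤ) - k - m) + 1) - 2 * partFun ((n : ℤ) - k - m)
          + partFun (((n : ℤ) - k - m) - 1) ∧
      0 ≤ Nk k m n - Nk k (m + 1) n := by
  have hm0 : 0 ≤ m := by omega
  have ha : (m.natAbs : ℤ) = m := Int.natAbs_of_nonneg hm0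
  have hb : ((m + 1).natAbs : ℤ) = m + 1 := Int.natAbs_of_nonneg (by omega)
  have hb' : (m + 1).natAbs = m.natAbs + 1 := by omega
  have c1 : (n : ℤ) < 2 * (m.natAbs : ℤ) := by omega
  have c2 : (n : ℤ) < 2 * ((m.natAbs + 1 : ℕ) : ℤ) := by simp only [Nat.cast_add, Nat.cast_one, ha]; omega
  have c3 : (n : ℤ) < 2 * ((m.natAbs + 1 + 1 : ℕ) : ℤ) := by simp only [Nat.cast_add, Nat.cast_one, ha]; omega
  have E1 := Ik_big k m.natAbs n hk c1
  have E2 := Ik_big k (m.natAbs + 1) n hk c2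
  have E3 := Ik_big k (m.natAbs + 1 + 1) n hk c3
  have key : Nk k m n - Nk k (m + 1) n =
      partFun (((n : ℤ) - k - m) + 1) - 2 * partFun ((n : ℤ) - k - m)
        + partFun (((n : ℤ) - k - m) - 1) := by
    rw [Nk, Nk, hb', E1, E2, E3]
    have a1 : (n : ℤ) - ((k : ℤ) - 1) - (m.natAbs : ℤ) = ((n : ℤ) - k - m) + 1 := by omega
    have a2 : (n : ℤ) - ((k : ℤ) - 1) - ((m.natAbs + 1 : ℕ) : ℤ) = (n : ℤ) - k - m := by
      simp only [Nat.cast_add, Nat.cast_one, ha]; omega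
    have a3 : (n : ℤ) - ((k : ℤ) - 1) - ((m.natAbs + 1 + 1 : ℕ) : ℤ) =
        ((n : ℤ) - k - m) - 1 := by simp only [Nat.cast_add, Nat.cast_one, ha]; omega
    rw [a1, a2, a3]
    ring
  refine ⟨key, ?_⟩
  rw [key]
  have hconv := partFun_convex ((n : ℤ) - k - m) (by omega)
  linarith
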